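/- Existence of the thresholds σ_k and λ_k: for k ∈ {4,5,6}, the function g(x) := δ(x) + δ(π − δ*_k − x) is strictly convex on the interval [π − δ*_k − 2, 2] and symmetric about x₀ = (π − δ*_k)/2, and satisfies g(x₀) < δ*_k/2 < g(2). Consequently the equation g(x) = δ*_k/2 has exactly two solutions σ_k < λ_k in [π − δ*_k − 2, 2], and they satisfy σ_k + λ_k = π − δ*_k. -/

import Mathlib

open Real MeasureTheory

/-- Arc distance between points on the unit circle, given by their polar angles:
the length of the shorter arc between them. -/
noncomputable def arcDist (p q : ℝ) : ℝ := ⨅ n : ℤ, |p - q + 2 * π * n|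

/-- Euclidean length of the chord between the circle points with angles `u` and `v`. -/
noncomputable def chordLen (u v : ℝ) : ℝ := 2 * Real.sin (arcDist u v / 2)

/-- A pair of angles is a genuine shortcut (chord) if its endpoints are distinct points. -/
def IsShortcut (s : ℝ × ℝ) : Prop := arcDist s.1 s.2 ≠ 0

/-- δ(a) = arcsin(a/2) - a/2. -/
noncomputable def sdelta (a : ℝ) : ℝ := Real.arcsin (a / 2) - a / 2

/-- Cost of a path that starts at `p`, fully traverses the listed chords in order
(travelling along the circle in between), and ends at `q`. -/
noncomputable def walkCost (q : ℝ) : ℝ → List (ℝ × ℝ) → ℝ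
  | p, [] => arcDist p q
  | p, e :: L => arcDist p e.1 + chordLen e.1 e.2 + walkCost q e.2 L

/-- Shortest-path distance from `p` to `q` using the shortcuts of `S`
(each usable in either orientation, and always traversed completely). -/
noncomputable def dS (S : Finset (ℝ × ℝ)) (p q : ℝ) : ℝ :=
  sInf {c | ∃ L : List (ℝ × ℝ), (∀ e ∈ L, e ∈ S ∨ (e.2, e.1) ∈ S) ∧ c = walkCost q p L}

/-- Diameter of the circle augmented with the shortcuts of `S`. -/
noncomputable def diamS (S : Finset (ℝ × ℝ)) : ℝ :=
  sSup {d | ∃ p q : ℝ, d = dS S p q}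

/-- diam(k): the optimal diameter achievable with `k` shortcuts. -/
noncomputable def diamK (k : ℕ) : ℝ :=
  sInf {d | ∃ S : Finset (ℝ × ℝ), S.card = k ∧ (∀ s ∈ S, IsShortcut s) ∧ d = diamS S}

/-- Distance from `p` to `q` when a single shortcut with endpoints `u`, `v` is available. -/
noncomputable def dOne (u v p q : ℝ) : ℝ :=
  min (arcDist p q)
    (min (arcDist p u + chordLen u v + arcDist v q)
      (arcDist p v + chordLen u v + arcDist u q))

/-- Two angles represent the same point of the circle. -/
def SamePoint (p q : ℝ) : Prop := arcDist p q = 0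

/-- Two pairs of angles represent the same chord of the circle. -/
def SameChord (s t : ℝ × ℝ) : Prop :=
  (SamePoint s.1 t.1 ∧ SamePoint s.2 t.2) ∨ (SamePoint s.1 t.2 ∧ SamePoint s.2 t.1)

/-- `p` lies in the deep umbra of the shortcut from `u` to `u + β`
(where `0 < β ≤ π` is the counterclockwise arc spanned by the shortcut):
`p` lies in the inner umbra, and `|p u'| + |s| ≥ d(p, v')` where `u'` is the
endpoint closer to `p` and `v'` the other one. -/
def InDeepUmbra (u β p : ℝ) : Prop :=
  (∃ t : ℝ, sdelta (chordLen u (u + β)) ≤ t ∧ t ≤ β - sdelta (chordLen u (u + β)) ∧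
    arcDist p (u + t) = 0) ∧
  (arcDist p u ≤ arcDist p (u + β) →
    arcDist p (u + β) ≤ chordLen p u + chordLen u (u + β)) ∧
  (arcDist p (u + β) ≤ arcDist p u →
    arcDist p u ≤ chordLen p (u + β) + chordLen u (u + β))

/-- `d` equals δ*_k : for `k ∈ {3,4,5}` this is `δ(a*_k)` where `a*_k + δ(a*_k) = (k-1)π/k`,
and for `k = 6` it is `δ(2) = π/2 - 1`. -/
def dstarSpec (k : ℕ) (d : ℝ) : Prop :=
  (k = 6 ∧ d = sdelta 2) ∨
    (∃ a, a ∈ Set.Icc (0 : ℝ) 2 ∧ a + sdelta a = ((k : ℝ) - 1) * π / k ∧ d = sdelta a)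


lemma sdelta_cont : Continuous sdelta :=
  (Real.continuous_arcsin.comp (continuous_id.div_const 2)).sub (continuous_id.div_const 2)

lemma sdelta_hasDerivAt {a : ℝ} (h1 : -2 < a) (h2 : a < 2) :
    HasDerivAt sdelta (1 / Real.sqrt (1 - (a/2)^2) * (1/2) - 1/2) a := by
  have hne1 : a/2 ≠ -1 := by intro h; rw [div_eq_iff (by norm_num : (2:ℝ) ≠ 0)] at h; linarith
  have hne2 : a/2 ≠ 1 := by intro h; rw [div_eq_iff (by norm_num : (2:ℝ) ≠ 0)] at h; linarith
  have hinner : HasDerivAt (fun x : ℝ => x/2) (1/2) a := by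
    simpa using (hasDerivAt_id a).div_const 2
  have hcomp := (Real.hasDerivAt_arcsin hne1 hne2).comp a hinner
  have hfin := hcomp.sub hinner
  exact hfin

lemma sdelta_deriv_eq {a : ℝ} (h1 : -2 < a) (h2 : a < 2) :
    deriv sdelta a = 1 / Real.sqrt (1 - (a/2)^2) * (1/2) - 1/2 :=
  (sdelta_hasDerivAt h1 h2).deriv

lemma sdelta_strictMonoOn : StrictMonoOn sdelta (Set.Icc (0:ℝ) 2) := by
  apply strictMonoOn_of_deriv_pos (convex_Icc 0 2) sdelta_cont.continuousOn
  rw [interior_Icc]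
  intro x hx
  rw [sdelta_deriv_eq (by linarith [hx.1]) hx.2]
  have hx2 : (x/2)^2 < 1 := by nlinarith [hx.1, hx.2]
  have hpos : 0 < 1 - (x/2)^2 := by linarith
  have hs : Real.sqrt (1 - (x/2)^2) < 1 := by
    have h := Real.sqrt_lt_sqrt (le_of_lt hpos) (by nlinarith [hx.1] : 1 - (x/2)^2 < 1)
    rwa [Real.sqrt_one] at h
  have hspos : 0 < Real.sqrt (1 - (x/2)^2) := Real.sqrt_pos.2 hpos
  have := one_lt_one_div hspos hs
  linarith

lemma sdelta_strictConvexOn : StrictConvexOn ℝ (Set.Icc (0:ℝ) 2) sdelta := by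
  apply StrictMonoOn.strictConvexOn_of_deriv (convex_Icc 0 2) sdelta_cont.continuousOn
  rw [interior_Icc]
  intro x hx y hy hxy
  rw [sdelta_deriv_eq (by linarith [hx.1]) hx.2, sdelta_deriv_eq (by linarith [hy.1]) hy.2]
  have hy2 : 0 < 1 - (y/2)^2 := by nlinarith [hy.1, hy.2]
  have hlt : (x/2)^2 < (y/2)^2 := by nlinarith [hx.1]
  have hBA : Real.sqrt (1 - (y/2)^2) < Real.sqrt (1 - (x/2)^2) :=
    Real.sqrt_lt_sqrt (by positivity) (by linarith)
  have hBpos : 0 < Real.sqrt (1 - (y/2)^2) := Real.sqrt_pos.2 hy2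
  have := one_div_lt_one_div_of_lt hBpos hBA
  linarith

lemma sdelta_nonneg {t : ℝ} (h0 : 0 ≤ t) (h2 : t ≤ 2) : 0 ≤ sdelta t := by
  have h0' : 0 ≤ t/2 := by linarith
  have h1 : t/2 ≤ 1 := by linarith
  have harc : 0 ≤ Real.arcsin (t/2) := Real.arcsin_nonneg.2 h0'
  have hsin : Real.sin (Real.arcsin (t/2)) = t/2 := Real.sin_arcsin (by linarith) h1
  have := Real.sin_le harc
  unfold sdelta
  linarith [hsin ▸ this]

lemma sdelta_two : sdelta 2 = π/2 - 1 := by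
  unfold sdelta; norm_num [Real.arcsin_one]

lemma mid_lt {f : ℝ → ℝ} {s : Set ℝ} (hf : StrictConvexOn ℝ s f) {p q r m : ℝ}
    (hp : p ∈ s) (hr : r ∈ s) (hpq : p < q) (hqr : q < r)
    (h1 : f p ≤ m) (h2 : f r ≤ m) : f q < m := by
  have hpr : p < r := hpq.trans hqr
  have ha : 0 < (r - q)/(r - p) := div_pos (by linarith) (by linarith)
  have hb : 0 < (q - p)/(r - p) := div_pos (by linarith) (by linarith)
  have hne : r - p ≠ 0 := ne_of_gt (by linarith)
  have hab : (r - q)/(r - p) + (q - p)/(r - p) = 1 := by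
    field_simp
    ring
  have hq : ((r - q)/(r - p)) • p + ((q - p)/(r - p)) • r = q := by
    simp only [smul_eq_mul]
    field_simp
    ring
  have hkey := hf.2 hp hr (ne_of_lt hpr) ha hb hab
  rw [hq] at hkey
  simp only [smul_eq_mul] at hkey
  have t1 : (r - q)/(r - p) * f p ≤ (r - q)/(r - p) * m := mul_le_mul_of_nonneg_left h1 ha.le
  have t2 : (q - p)/(r - p) * f r ≤ (q - p)/(r - p) * m := mul_le_mul_of_nonneg_left h2 hb.le
  have t3 : (r - q)/(r - p) * m + (q - p)/(r - p) * m = m := by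
    rw [← add_mul, hab, one_mul]
  linarith

lemma dstar_bounds (k : ℕ) (hk : k ∈ ({4, 5, 6} : Set ℕ)) (dstar : ℝ)
    (hd : dstarSpec k dstar) : π - 2 * Real.sqrt 2 < dstar ∧ dstar ≤ π/2 - 1 := by
  have s2sq : Real.sqrt 2 ^ 2 = 2 := Real.sq_sqrt (by norm_num)
  have s2nn : (0:ℝ) ≤ Real.sqrt 2 := Real.sqrt_nonneg 2
  have s2gt : (1.414 : ℝ) < Real.sqrt 2 := by nlinarith
  have pilt : π < 3.15 := by linarith [Real.pi_lt_d2]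
  have pigt : (3.141592 : ℝ) < π := Real.pi_gt_d6
  rcases hd with ⟨hk6, hdd⟩ | ⟨a, ⟨ha0, ha2⟩, heq, hdd⟩
  · rw [hdd, sdelta_two]
    constructor <;> nlinarith
  · constructor
    · rw [hdd]
      simp only [Set.mem_insert_iff, Set.mem_singleton_iff] at hk
      rcases hk with rfl | rfl | rfl <;> push_cast at heq <;> linarith
    · rw [hdd, ← sdelta_two]
      rcases eq_or_lt_of_le ha2 with h | h
      · rw [h]
      · exact le_of_lt (sdelta_strictMonoOn ⟨ha0, ha2⟩ ⟨by norm_num, le_refl 2⟩ h)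

/-- existence of the thresholds `σ_k` and `λ_k` for `k ∈ {4,5,6}`:
`g(x) = δ(x) + δ(π - δ*_k - x)` is strictly convex on `[π - δ*_k - 2, 2]`, symmetric
about `x₀ = (π - δ*_k)/2`, satisfies `g(x₀) < δ*_k/2 < g(2)`, and hence the equation
`g(x) = δ*_k/2` has exactly two solutions `σ_k < λ_k` there, with
`σ_k + λ_k = π - δ*_k`. -/
theorem stmt17 (k : ℕ) (hk : k ∈ ({4, 5, 6} : Set ℕ)) (dstar : ℝ)
    (hd : dstarSpec k dstar) :
    StrictConvexOn ℝ (Set.Icc (π - dstar - 2) 2)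
        (fun x => sdelta x + sdelta (π - dstar - x)) ∧
    (∀ t : ℝ,
      sdelta ((π - dstar) / 2 + t) + sdelta (π - dstar - ((π - dstar) / 2 + t))
        = sdelta ((π - dstar) / 2 - t) + sdelta (π - dstar - ((π - dstar) / 2 - t))) ∧
    sdelta ((π - dstar) / 2) + sdelta (π - dstar - (π - dstar) / 2) < dstar / 2 ∧
    dstar / 2 < sdelta 2 + sdelta (π - dstar - 2) ∧
    ∃ sig lam : ℝ, sig ∈ Set.Icc (π - dstar - 2) 2 ∧ lam ∈ Set.Icc (π - dstar - 2) 2 ∧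
      sig < lam ∧
      sdelta sig + sdelta (π - dstar - sig) = dstar / 2 ∧
      sdelta lam + sdelta (π - dstar - lam) = dstar / 2 ∧
      sig + lam = π - dstar ∧
      ∀ x ∈ Set.Icc (π - dstar - 2) 2,
        sdelta x + sdelta (π - dstar - x) = dstar / 2 → x = sig ∨ x = lam := by
  obtain ⟨hlow, hup⟩ := dstar_bounds k hk dstar hd
  have s2sq : Real.sqrt 2 ^ 2 = 2 := Real.sq_sqrt (by norm_num)
  have s2nn : (0:ℝ) ≤ Real.sqrt 2 := Real.sqrt_nonneg 2
  have s2gt : (1.414 : ℝ) < Real.sqrt 2 := by nlinarith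
  have s2lt : Real.sqrt 2 < 1.415 := by nlinarith
  have pilt : π < 3.15 := by linarith [Real.pi_lt_d2]
  have pigt : (3.141592 : ℝ) < π := Real.pi_gt_d6
  have hd0 : 0 < dstar := by nlinarith
  have hc2 : 2 < π - dstar := by nlinarith
  have hcu : π - dstar < 2 * Real.sqrt 2 := by linarith
  have hc3 : π - dstar < 3 := by nlinarith
  -- strict convexity
  have hsub : Set.Icc (π - dstar - 2) 2 ⊆ Set.Icc (0:ℝ) 2 :=
    Set.Icc_subset_Icc (by linarith) le_rfl
  have h1 : StrictConvexOn ℝ (Set.Icc (π - dstar - 2) 2) sdelta :=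
    sdelta_strictConvexOn.subset hsub (convex_Icc _ _)
  have h2 : StrictConvexOn ℝ (Set.Icc (π - dstar - 2) 2) (fun x => sdelta (π - dstar - x)) := by
    refine ⟨convex_Icc _ _, ?_⟩
    intro x hx y hy hxy a b ha hb hab
    simp only [smul_eq_mul]
    show sdelta (π - dstar - (a * x + b * y))
        < a * sdelta (π - dstar - x) + b * sdelta (π - dstar - y)
    have hx' : π - dstar - x ∈ Set.Icc (0:ℝ) 2 := ⟨by linarith [hx.2], by linarith [hx.1]⟩
    have hy' : π - dstar - y ∈ Set.Icc (0:ℝ) 2 := ⟨by linarith [hy.2], by linarith [hy.1]⟩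
    have hne : π - dstar - x ≠ π - dstar - y := fun h => hxy (by linarith)
    have hkey := sdelta_strictConvexOn.2 hx' hy' hne ha hb hab
    simp only [smul_eq_mul] at hkey
    have harg : π - dstar - (a * x + b * y) = a * (π - dstar - x) + b * (π - dstar - y) := by
      linear_combination (dstar - π) * hab
    rw [harg]
    exact hkey
  have hgconv : StrictConvexOn ℝ (Set.Icc (π - dstar - 2) 2)
      (fun x => sdelta x + sdelta (π - dstar - x)) := h1.add h2
  -- symmetry
  have hsym : ∀ t : ℝ,
      sdelta ((π - dstar) / 2 + t) + sdelta (π - dstar - ((π - dstar) / 2 + t))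
        = sdelta ((π - dstar) / 2 - t) + sdelta (π - dstar - ((π - dstar) / 2 - t)) := by
    intro t
    rw [show π - dstar - ((π - dstar) / 2 + t) = (π - dstar) / 2 - t from by ring,
      show π - dstar - ((π - dstar) / 2 - t) = (π - dstar) / 2 + t from by ring]
    exact add_comm _ _
  -- value at the midpoint
  have hineq1 : sdelta ((π - dstar) / 2) + sdelta (π - dstar - (π - dstar) / 2) < dstar / 2 := by
    rw [show π - dstar - (π - dstar) / 2 = (π - dstar) / 2 from by ring]
    have hval : sdelta ((π - dstar)/2) = Real.arcsin ((π - dstar)/4) - (π - dstar)/4 := by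
      unfold sdelta
      rw [show (π - dstar)/2/2 = (π - dstar)/4 from by ring]
    have hsv : Real.arcsin (Real.sqrt 2 / 2) = π/4 := by
      rw [← Real.sin_pi_div_four]
      exact Real.arcsin_sin (by linarith) (by linarith)
    have hq : Real.arcsin ((π - dstar)/4) < π/4 := by
      rw [← hsv]
      exact Real.strictMonoOn_arcsin ⟨by linarith, by linarith⟩
        ⟨by linarith, by linarith⟩ (by linarith)
    rw [hval]
    linarith
  -- value at the right endpoint
  have hineq2 : dstar / 2 < sdelta 2 + sdelta (π - dstar - 2) := by
    have hnn := sdelta_nonneg (t := π - dstar - 2) (by linarith) (by linarith)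
    linarith [sdelta_two]
  refine ⟨hgconv, hsym, hineq1, hineq2, ?_⟩
  -- existence of lam by the intermediate value theorem
  have gcont : ContinuousOn (fun x => sdelta x + sdelta (π - dstar - x))
      (Set.Icc ((π - dstar)/2) 2) :=
    (sdelta_cont.add (sdelta_cont.comp (continuous_const.sub continuous_id))).continuousOn
  have hx0le : (π - dstar)/2 ≤ 2 := by linarith
  obtain ⟨lam, hlmem, hglam⟩ := intermediate_value_Icc hx0le gcont
    (Set.mem_Icc.2 ⟨hineq1.le, hineq2.le⟩)
  have hglam' : sdelta lam + sdelta (π - dstar - lam) = dstar / 2 := hglam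
  have hlam1 : (π - dstar)/2 ≤ lam := hlmem.1
  have hlam2 : lam ≤ 2 := hlmem.2
  have hlamne : (π - dstar)/2 < lam := by
    rcases lt_or_eq_of_le hlam1 with h | h
    · exact h
    · exfalso; rw [← h] at hglam'; linarith [hineq1]
  have hmemsig : π - dstar - lam ∈ Set.Icc (π - dstar - 2) 2 :=
    ⟨by linarith, by linarith⟩
  have hmemlam : lam ∈ Set.Icc (π - dstar - 2) 2 := ⟨by linarith, hlam2⟩
  have hgsig : sdelta (π - dstar - lam) + sdelta (π - dstar - (π - dstar - lam)) = dstar / 2 := by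
    rw [show π - dstar - (π - dstar - lam) = lam from by ring]
    linarith [hglam']
  refine ⟨π - dstar - lam, lam, hmemsig, hmemlam, by linarith, hgsig, hglam', by ring, ?_⟩
  intro x hx hgx
  by_contra hcon
  push_neg at hcon
  obtain ⟨hne1, hne2⟩ := hcon
  rcases lt_trichotomy x (π - dstar - lam) with hlt | heq | hgt
  · have hmid := mid_lt hgconv hx hmemlam hlt (by linarith) hgx.le hglam'.le
    have hmid' : sdelta (π - dstar - lam) + sdelta (π - dstar - (π - dstar - lam)) < dstar / 2 :=
      hmid
    linarith [hgsig]
  · exact hne1 heq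
  · rcases lt_trichotomy x lam with h2 | h2 | h2
    · have hmid := mid_lt hgconv hmemsig hmemlam hgt h2 hgsig.le hglam'.le
      have hmid' : sdelta x + sdelta (π - dstar - x) < dstar / 2 := hmid
      linarith [hgx]
    · exact hne2 h2
    · have hmid := mid_lt hgconv hmemsig hx (by linarith) h2 hgsig.le hgx.le
      have hmid' : sdelta lam + sdelta (π - dstar - lam) < dstar / 2 := hmid
      linarith [hglam']
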